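/- arXiv:1701.06689 — 8 statements merged into one kernel-verified Lean document; each statement's English description precedes it below -/
import Mathlib

section
/- Wallis's bounds: for every natural number n ≥ 1, the quantity θ_n := 2^{4n} · (n!)^4 / (π · n · ((2n)!)²) satisfies √(1 + 1/(2n)) < θ_n < √(1 + 1/(2n-1)). -/
open Real Filter Finset Topology

noncomputable def wth (n : ℕ) : ℝ :=
  2 ^ (4 * n) * ((n.factorial : ℝ)) ^ 4 / (π * (n : ℝ) * (((2 * n).factorial : ℝ)) ^ 2)

lemma wth_pos {n : ℕ} (hn : 1 ≤ n) : 0 < wth n := by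
  have h1 : (0:ℝ) < n := by exact_mod_cast hn
  have hπ := Real.pi_pos
  have h2 : (0:ℝ) < (n.factorial : ℝ) := by exact_mod_cast n.factorial_pos
  have h3 : (0:ℝ) < ((2*n).factorial : ℝ) := by exact_mod_cast (2*n).factorial_pos
  unfold wth; positivity

lemma fact_cast_succ2 (n : ℕ) :
    (((2*(n+1)).factorial : ℝ)) = (2*(n:ℝ)+2) * (2*n+1) * ((2*n).factorial : ℝ) := by
  have h : 2*(n+1) = (2*n+1)+1 := by ring
  rw [h, Nat.factorial_succ, Nat.factorial_succ]
  push_cast; ring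

lemma wth_succ {n : ℕ} (hn : 1 ≤ n) :
    wth (n+1) = wth n * (4 * n * ((n:ℝ)+1) / (2*(n:ℝ)+1)^2) := by
  have h1 : (0:ℝ) < n := by exact_mod_cast hn
  have hπ := Real.pi_pos
  have h3 : (0:ℝ) < ((2*n).factorial : ℝ) := by exact_mod_cast (2*n).factorial_pos
  have h4 : (0:ℝ) < (2*(n:ℝ)+1) := by positivity
  unfold wth
  rw [fact_cast_succ2]
  have h5 : 4*(n+1) = 4*n+4 := by ring
  rw [h5, pow_add, Nat.factorial_succ]
  push_cast
  field_simp
  ring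

lemma wth_eq_W {n : ℕ} (hn : 1 ≤ n) :
    wth n = Real.Wallis.W n * ((2*(n:ℝ)+1) / (π * n)) := by
  have h1 : (0:ℝ) < n := by exact_mod_cast hn
  have hπ := Real.pi_pos
  have h3 : (0:ℝ) < ((2*n).factorial : ℝ) := by exact_mod_cast (2*n).factorial_pos
  have h4 : (0:ℝ) < (2*(n:ℝ)+1) := by positivity
  rw [Real.Wallis.W_eq_factorial_ratio]
  unfold wth
  field_simp

lemma tendsto_wth : Tendsto wth atTop (𝓝 1) := by
  have hπ := Real.pi_pos
  have h2 : Tendsto (fun n : ℕ => (2*(n:ℝ)+1)/(π*(n:ℝ))) atTop (𝓝 (2/π)) := by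
    have h3 : Tendsto (fun n:ℕ => (2 + 1/(n:ℝ))/π) atTop (𝓝 ((2+0)/π)) :=
      (tendsto_const_nhds.add tendsto_one_div_atTop_nhds_zero_nat).div_const π
    rw [add_zero] at h3
    refine h3.congr' ?_
    filter_upwards [eventually_ge_atTop 1] with n hn
    have h1 : (0:ℝ) < n := by exact_mod_cast hn
    rw [div_eq_div_iff (by positivity) (by positivity)]
    field_simp
  have h1 : Tendsto (fun n : ℕ => Real.Wallis.W n * ((2*(n:ℝ)+1) / (π * n)))
      atTop (𝓝 (π/2 * (2/π))) := Real.Wallis.tendsto_W_nhds_pi_div_two.mul h2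
  have hval : π/2 * (2/π) = 1 := by field_simp
  rw [hval] at h1
  refine h1.congr' ?_
  filter_upwards [eventually_ge_atTop 1] with n hn
  exact (wth_eq_W hn).symm

noncomputable def wA (n : ℕ) : ℝ := wth n ^ 2 * (2*(n:ℝ)/(2*(n:ℝ)+1))
noncomputable def wB (n : ℕ) : ℝ := wth n ^ 2 * ((2*(n:ℝ)-1)/(2*(n:ℝ)))

lemma tendsto_factor : Tendsto (fun n : ℕ => 2*(n:ℝ)/(2*(n:ℝ)+1)) atTop (𝓝 1) := by
  have h3 : Tendsto (fun n:ℕ => (2:ℝ)/(2 + 1/(n:ℝ))) atTop (𝓝 (2/(2+0))) :=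
    tendsto_const_nhds.div (tendsto_const_nhds.add tendsto_one_div_atTop_nhds_zero_nat)
      (by norm_num)
  norm_num at h3
  refine h3.congr' ?_
  filter_upwards [eventually_ge_atTop 1] with n hn
  have h1 : (0:ℝ) < n := by exact_mod_cast hn
  rw [div_eq_div_iff (by positivity) (by positivity)]
  field_simp

lemma tendsto_factorB : Tendsto (fun n : ℕ => (2*(n:ℝ)-1)/(2*(n:ℝ))) atTop (𝓝 1) := by
  have h3 : Tendsto (fun n:ℕ => ((2:ℝ) - 1/(n:ℝ))/2) atTop (𝓝 ((2-0)/2)) :=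
    (tendsto_const_nhds.sub tendsto_one_div_atTop_nhds_zero_nat).div_const 2
  norm_num at h3
  refine h3.congr' ?_
  filter_upwards [eventually_ge_atTop 1] with n hn
  have h1 : (0:ℝ) < n := by exact_mod_cast hn
  rw [div_eq_div_iff (by norm_num) (by positivity)]
  field_simp

lemma tendsto_wA : Tendsto wA atTop (𝓝 1) := by
  have := ((tendsto_wth.pow 2).mul tendsto_factor)
  norm_num at this
  exact this

lemma tendsto_wB : Tendsto wB atTop (𝓝 1) := by
  have := ((tendsto_wth.pow 2).mul tendsto_factorB)
  norm_num at this
  exact this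

lemma wA_step {n : ℕ} (hn : 1 ≤ n) : wA (n+1) < wA n := by
  have h1 : (1:ℝ) ≤ n := by exact_mod_cast hn
  have hth := wth_pos hn
  unfold wA
  rw [wth_succ hn]
  push_cast
  have key : (4*(n:ℝ)*((n:ℝ)+1)/(2*(n:ℝ)+1)^2)^2 * (2*((n:ℝ)+1)/(2*((n:ℝ)+1)+1))
      < 2*(n:ℝ)/(2*(n:ℝ)+1) := by
    rw [div_pow, div_mul_div_comm, div_lt_div_iff₀ (by positivity) (by positivity)]
    nlinarith [h1, sq_nonneg ((n:ℝ)), sq_nonneg ((n:ℝ)+1)]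
  calc (wth n * (4*(n:ℝ)*((n:ℝ)+1)/(2*(n:ℝ)+1)^2))^2 * (2*((n:ℝ)+1)/(2*((n:ℝ)+1)+1))
      = wth n ^ 2 * ((4*(n:ℝ)*((n:ℝ)+1)/(2*(n:ℝ)+1)^2)^2 * (2*((n:ℝ)+1)/(2*((n:ℝ)+1)+1))) := by
        ring
    _ < wth n ^ 2 * (2*(n:ℝ)/(2*(n:ℝ)+1)) := by
        exact mul_lt_mul_of_pos_left key (pow_pos hth 2)

lemma wB_step {n : ℕ} (hn : 1 ≤ n) : wB n < wB (n+1) := by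
  have h1 : (1:ℝ) ≤ n := by exact_mod_cast hn
  have hth := wth_pos hn
  unfold wB
  rw [wth_succ hn]
  push_cast
  have key : (2*(n:ℝ)-1)/(2*(n:ℝ))
      < (4*(n:ℝ)*((n:ℝ)+1)/(2*(n:ℝ)+1)^2)^2 * ((2*((n:ℝ)+1)-1)/(2*((n:ℝ)+1))) := by
    rw [div_pow, div_mul_div_comm, div_lt_div_iff₀ (by positivity) (by positivity)]
    nlinarith [h1, sq_nonneg ((n:ℝ)), sq_nonneg ((n:ℝ)+1)]
  calc wth n ^ 2 * ((2*(n:ℝ)-1)/(2*(n:ℝ)))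
      < wth n ^ 2 * ((4*(n:ℝ)*((n:ℝ)+1)/(2*(n:ℝ)+1)^2)^2 * ((2*((n:ℝ)+1)-1)/(2*((n:ℝ)+1)))) :=
        mul_lt_mul_of_pos_left key (pow_pos hth 2)
    _ = (wth n * (4*(n:ℝ)*((n:ℝ)+1)/(2*(n:ℝ)+1)^2))^2 * ((2*((n:ℝ)+1)-1)/(2*((n:ℝ)+1))) := by
        ring

lemma one_lt_wA {n : ℕ} (hn : 1 ≤ n) : 1 < wA n := by
  have hmono : ∀ m, n+1 ≤ m → wA m ≤ wA (n+1) := by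
    intro m hm
    induction m, hm using Nat.le_induction with
    | base => exact le_refl _
    | succ m hm ih =>
      exact le_trans (le_of_lt (wA_step (le_trans (Nat.le_add_right 1 n)
        (by omega)))) ih
  have h1 : 1 ≤ wA (n+1) :=
    le_of_tendsto tendsto_wA (eventually_atTop.2 ⟨n+1, hmono⟩)
  exact lt_of_le_of_lt h1 (wA_step hn)

lemma wB_lt_one {n : ℕ} (hn : 1 ≤ n) : wB n < 1 := by
  have hmono : ∀ m, n+1 ≤ m → wB (n+1) ≤ wB m := by
    intro m hm
    induction m, hm using Nat.le_induction with
    | base => exact le_refl _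
    | succ m hm ih =>
      exact le_trans ih (le_of_lt (wB_step (le_trans (Nat.le_add_right 1 n) (by omega))))
  have h1 : wB (n+1) ≤ 1 :=
    ge_of_tendsto tendsto_wB (eventually_atTop.2 ⟨n+1, hmono⟩)
  exact lt_of_lt_of_le (wB_step hn) h1

/-- Wallis's bounds: for `n ≥ 1`, the quantity
`θ_n = 2^{4n} (n!)^4 / (π n ((2n)!)²)` satisfies
`√(1 + 1/(2n)) < θ_n < √(1 + 1/(2n-1))`. -/
theorem wallis_theta_bounds (n : ℕ) (hn : 1 ≤ n) :
    Real.sqrt (1 + 1 / (2 * (n : ℝ))) <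
        2 ^ (4 * n) * ((n.factorial : ℝ)) ^ 4 /
          (π * (n : ℝ) * (((2 * n).factorial : ℝ)) ^ 2) ∧
      2 ^ (4 * n) * ((n.factorial : ℝ)) ^ 4 /
          (π * (n : ℝ) * (((2 * n).factorial : ℝ)) ^ 2) <
        Real.sqrt (1 + 1 / (2 * (n : ℝ) - 1)) := by
  have h1 : (1:ℝ) ≤ n := by exact_mod_cast hn
  have hth := wth_pos hn
  have hA := one_lt_wA hn
  have hB := wB_lt_one hn
  unfold wA at hA
  unfold wB at hB
  have hpos : (0:ℝ) < 2*(n:ℝ) := by linarith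
  have hpos1 : (0:ℝ) < 2*(n:ℝ)+1 := by linarith
  have hpos2 : (0:ℝ) < 2*(n:ℝ)-1 := by linarith
  constructor
  · show Real.sqrt (1 + 1 / (2 * (n : ℝ))) < wth n
    rw [show wth n = Real.sqrt (wth n ^ 2) from (Real.sqrt_sq hth.le).symm]
    apply Real.sqrt_lt_sqrt (by positivity)
    rw [show wth n ^2 * (2*(n:ℝ)/(2*(n:ℝ)+1)) = wth n ^2 * (2*(n:ℝ))/(2*(n:ℝ)+1) from by
      ring, lt_div_iff₀ hpos1, one_mul] at hA
    rw [show (1:ℝ) + 1/(2*(n:ℝ)) = (2*(n:ℝ)+1)/(2*(n:ℝ)) from by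
      field_simp, div_lt_iff₀ hpos]
    nlinarith
  · show wth n < Real.sqrt (1 + 1 / (2 * (n : ℝ) - 1))
    rw [show wth n = Real.sqrt (wth n ^ 2) from (Real.sqrt_sq hth.le).symm]
    apply Real.sqrt_lt_sqrt (by positivity)
    rw [show wth n ^2 * ((2*(n:ℝ)-1)/(2*(n:ℝ))) = wth n ^2 * (2*(n:ℝ)-1)/(2*(n:ℝ)) from by
      ring, div_lt_one hpos] at hB
    rw [show (1:ℝ) + 1/(2*(n:ℝ)-1) = (2*(n:ℝ))/(2*(n:ℝ)-1) from by
      field_simp; ring, lt_div_iff₀ hpos2]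
    nlinarith
end

section
/- First-order correction in De Moivre's form of Stirling's series: the sequence n · ( log(n!) - (n + 1/2)·log n + n - log √(2π) ) converges to 1/12 as n → ∞. -/
open Filter Real

open Stirling Nat in
private lemma stirling_diff_bounds (m : ℕ) :
    1 / (12 * ((m : ℝ) + 1) + 1) - 1 / (12 * ((m : ℝ) + 2) + 1)
      ≤ Real.log (stirlingSeq (m + 1)) - Real.log (stirlingSeq (m + 2)) ∧
    Real.log (stirlingSeq (m + 1)) - Real.log (stirlingSeq (m + 2))
      ≤ 1 / (12 * ((m : ℝ) + 1)) - 1 / (12 * ((m : ℝ) + 2)) := by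
  have hm : (0:ℝ) ≤ (m:ℝ) := Nat.cast_nonneg m
  set t2 : ℝ := ((1 : ℝ) / (2 * ↑(m + 1) + 1)) ^ 2 with ht2
  have hsum := Stirling.log_stirlingSeq_diff_hasSum m
  have ht2_nonneg : 0 ≤ t2 := sq_nonneg _
  have ht2e : t2 = 1 / (2 * ((m:ℝ)+1) + 1) ^ 2 := by
    rw [ht2]; push_cast; rw [div_pow, one_pow]
  have ht2_lt : t2 < 1 := by
    rw [ht2e, div_lt_one (by positivity)]
    nlinarith
  have hA : (0:ℝ) < 12 * ((m:ℝ) + 1) + 1 := by positivity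
  have hB : (0:ℝ) < 12 * ((m:ℝ) + 2) + 1 := by positivity
  constructor
  · -- lower bound: first term of the series
    have h0 := le_hasSum hsum 0 (fun k _ => by positivity)
    norm_num at h0
    refine le_trans ?_ h0
    push_cast
    rw [← one_div, _root_.div_mul_div_comm, div_sub_div _ _ hA.ne' hB.ne',
      div_le_div_iff₀ (by positivity) (by positivity)]
    nlinarith
  · -- upper bound: compare with geometric series times 1/3
    have hgeo : HasSum (fun k : ℕ => (1:ℝ)/3 * t2 ^ (k + 1)) (1/3 * (t2 / (1 - t2))) := by
      have h := (hasSum_geometric_of_lt_one ht2_nonneg ht2_lt).mul_left (t2/3)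
      have e1 : (fun k : ℕ => (1:ℝ)/3 * t2 ^ (k+1)) = fun k : ℕ => t2/3 * t2^k := by
        funext k; ring
      have e2 : (1:ℝ)/3 * (t2/(1-t2)) = t2/3 * (1-t2)⁻¹ := by ring
      rw [e1, e2]; exact h
    have hle : Real.log (stirlingSeq (m + 1)) - Real.log (stirlingSeq (m + 2))
        ≤ 1/3 * (t2 / (1 - t2)) := by
      refine hasSum_le (fun k => ?_) hsum hgeo
      have h1 : (1 : ℝ) / (2 * ↑(k + 1) + 1) ≤ 1/3 := by
        rw [div_le_div_iff₀ (by positivity) (by norm_num)]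
        push_cast; nlinarith [Nat.cast_nonneg (α := ℝ) k]
      exact mul_le_mul_of_nonneg_right h1 (pow_nonneg ht2_nonneg _)
    refine hle.trans (le_of_eq ?_)
    have hpos : (0:ℝ) < 1 - t2 := sub_pos.mpr ht2_lt
    have h1 : ((2 * ((m:ℝ)+1) + 1) ^ 2 : ℝ) ≠ 0 := by positivity
    have key : t2 / (1 - t2) = 1 / (4 * ((m:ℝ)+1) * ((m:ℝ)+2)) := by
      rw [div_eq_div_iff hpos.ne' (by positivity), ht2e]
      field_simp
      ring
    rw [key]
    rw [_root_.div_mul_div_comm, div_sub_div _ _ (by positivity : (12*((m:ℝ)+1):ℝ) ≠ 0)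
      (by positivity : (12*((m:ℝ)+2):ℝ) ≠ 0), div_eq_div_iff (by positivity) (by positivity)]
    ring

/-- First-order correction in De Moivre's form of Stirling's series:
`n (log(n!) - (n + 1/2) log n + n - log √(2π)) → 1/12`. -/
theorem stirling_first_correction :
    Tendsto (fun n : ℕ =>
        (n : ℝ) * (Real.log (n.factorial : ℝ) - ((n : ℝ) + 1 / 2) * Real.log (n : ℝ)
          + (n : ℝ) - Real.log (Real.sqrt (2 * π))))
      atTop (nhds (1 / 12)) := by
  have hπ : (0:ℝ) < π := Real.pi_pos
  -- the normalized error sequence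
  set E : ℕ → ℝ := fun n => Real.log (Stirling.stirlingSeq (n+1)) - Real.log (Real.sqrt π)
    with hE
  have hE0 : Tendsto E atTop (nhds 0) := by
    have h1 : Tendsto (fun n : ℕ => Stirling.stirlingSeq (n+1)) atTop (nhds (Real.sqrt π)) :=
      Stirling.tendsto_stirlingSeq_sqrt_pi.comp (tendsto_add_atTop_nat 1)
    have h2 : ContinuousAt Real.log (Real.sqrt π) := Real.continuousAt_log (by positivity)
    have h3 := (h2.tendsto.comp h1).sub_const (Real.log (Real.sqrt π))
    simpa using h3
  have hup : Tendsto (fun n : ℕ => 1 / (12 * ((n:ℝ)+1))) atTop (nhds 0) := by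
    have h := tendsto_one_div_add_atTop_nhds_zero_nat.const_mul (1/12 : ℝ)
    rw [mul_zero] at h
    refine h.congr fun n => ?_
    rw [one_div, one_div, one_div, ← mul_inv]
  have hup1 : Tendsto (fun n : ℕ => 1 / (12 * ((n:ℝ)+1) + 1)) atTop (nhds 0) := by
    have h12 : Tendsto (fun n : ℕ => 12 * ((n:ℝ)+1) + 1) atTop atTop := by
      apply tendsto_atTop_add_const_right
      apply Tendsto.const_mul_atTop (by norm_num : (0:ℝ) < 12)
      exact tendsto_natCast_atTop_atTop.atTop_add tendsto_const_nhds
    simpa [one_div, Pi.inv_def] using h12.inv_tendsto_atTop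
  -- upper bound on E
  have hEupper : ∀ n : ℕ, E n ≤ 1 / (12 * ((n:ℝ)+1)) := by
    have hmono : Monotone (fun n : ℕ => E n - 1 / (12 * ((n:ℝ)+1))) := by
      apply monotone_nat_of_le_succ
      intro n
      have h := (stirling_diff_bounds n).2
      have : E n - E (n+1) = Real.log (Stirling.stirlingSeq (n+1)) -
          Real.log (Stirling.stirlingSeq (n+2)) := by simp [hE]
      push_cast
      have e2 : (12*((n:ℝ)+1+1) : ℝ) = 12*((n:ℝ)+2) := by ring
      have e3 : (12*((n:ℝ)+1+1)+1 : ℝ) = 12*((n:ℝ)+2)+1 := by ring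
      rw [e2] <;> try rw [e3]
      linarith [h, this.ge, this.le]
    have hlim : Tendsto (fun n : ℕ => E n - 1 / (12 * ((n:ℝ)+1))) atTop (nhds 0) := by
      simpa using hE0.sub hup
    intro n
    have := hmono.ge_of_tendsto hlim n
    linarith
  -- lower bound on E
  have hElower : ∀ n : ℕ, 1 / (12 * ((n:ℝ)+1) + 1) ≤ E n := by
    have hanti : Antitone (fun n : ℕ => E n - 1 / (12 * ((n:ℝ)+1) + 1)) := by
      apply antitone_nat_of_succ_le
      intro n
      have h := (stirling_diff_bounds n).1
      have : E n - E (n+1) = Real.log (Stirling.stirlingSeq (n+1)) -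
          Real.log (Stirling.stirlingSeq (n+2)) := by simp [hE]
      push_cast
      have e2 : (12*((n:ℝ)+1+1) : ℝ) = 12*((n:ℝ)+2) := by ring
      have e3 : (12*((n:ℝ)+1+1)+1 : ℝ) = 12*((n:ℝ)+2)+1 := by ring
      rw [e2] <;> try rw [e3]
      linarith [h, this.ge, this.le]
    have hlim : Tendsto (fun n : ℕ => E n - 1 / (12 * ((n:ℝ)+1) + 1)) atTop (nhds 0) := by
      simpa using hE0.sub hup1
    intro n
    have := hanti.le_of_tendsto hlim n
    linarith
  -- reduce to the shifted sequence
  rw [← Filter.tendsto_add_atTop_iff_nat 1]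
  -- rewrite the expression in terms of E
  have hexpr : ∀ n : ℕ, Real.log ((n+1).factorial : ℝ)
      - ((↑(n+1) : ℝ) + 1 / 2) * Real.log (↑(n+1) : ℝ) + (↑(n+1) : ℝ)
      - Real.log (Real.sqrt (2 * π)) = E n := by
    intro n
    have hx : (0:ℝ) < (n:ℝ) + 1 := by positivity
    have hf := Stirling.log_stirlingSeq_formula (n+1)
    have hcast : ((n+1 : ℕ) : ℝ) = (n:ℝ) + 1 := by push_cast; ring
    rw [hcast] at hf
    have h2x : Real.log (2 * ((n:ℝ)+1)) = Real.log 2 + Real.log ((n:ℝ)+1) :=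
      Real.log_mul two_ne_zero hx.ne'
    have hxe : Real.log (((n:ℝ)+1) / Real.exp 1) = Real.log ((n:ℝ)+1) - 1 := by
      rw [Real.log_div hx.ne' (Real.exp_ne_zero 1), Real.log_exp]
    have hs2π : Real.log (Real.sqrt (2 * π)) = 1/2 * (Real.log 2 + Real.log π) := by
      rw [Real.log_sqrt (by positivity), Real.log_mul two_ne_zero hπ.ne']
      ring
    have hsπ : Real.log (Real.sqrt π) = 1/2 * Real.log π := by
      rw [Real.log_sqrt hπ.le]; ring
    rw [hE]
    push_cast
    rw [hf, h2x, hxe, hs2π, hsπ]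
    ring
  have heq : (fun n : ℕ => (↑(n+1) : ℝ) * (Real.log ((n+1).factorial : ℝ)
      - ((↑(n+1) : ℝ) + 1 / 2) * Real.log (↑(n+1) : ℝ) + (↑(n+1) : ℝ)
      - Real.log (Real.sqrt (2 * π))))
      = fun n : ℕ => ((n:ℝ)+1) * E n := by
    funext n
    rw [hexpr n]
    push_cast
    ring
  rw [heq]
  -- squeeze
  have hlow : Tendsto (fun n : ℕ => ((n:ℝ)+1) * (1 / (12 * ((n:ℝ)+1) + 1)))
      atTop (nhds (1/12)) := by
    have h : Tendsto (fun n : ℕ => (12 + 1/((n:ℝ)+1))⁻¹) atTop (nhds ((12 + 0 : ℝ))⁻¹) := by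
      exact (tendsto_one_div_add_atTop_nhds_zero_nat.const_add 12).inv₀ (by norm_num)
    rw [show ((12:ℝ) + 0)⁻¹ = 1/12 by norm_num] at h
    refine h.congr fun n => ?_
    have hx : (0:ℝ) < (n:ℝ) + 1 := by positivity
    rw [eq_comm, mul_one_div, inv_eq_one_div,
      div_eq_div_iff (by positivity) (by positivity)]
    field_simp
  refine tendsto_of_tendsto_of_tendsto_of_le_of_le hlow tendsto_const_nhds
    (fun n => ?_) (fun n => ?_)
  · have hx : (0:ℝ) ≤ (n:ℝ) + 1 := by positivity
    exact mul_le_mul_of_nonneg_left (hElower n) hx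
  · have hx : (0:ℝ) < (n:ℝ) + 1 := by positivity
    have := mul_le_mul_of_nonneg_left (hEupper n) hx.le
    refine this.trans (le_of_eq ?_)
    rw [mul_one_div]
    rw [div_eq_div_iff (by positivity) (by norm_num : (12:ℝ) ≠ 0)]
    ring
end

section
/- First-order correction in Stirling's original series: with z = n + 1/2, the sequence z · ( log(n!) - ( z·log z - z + log √(2π) ) ) converges to -1/24 as n → ∞. -/
open Filter Real Topology

noncomputable def dSeq (n : ℕ) : ℝ :=
  Real.log (n.factorial : ℝ) -
    (((n : ℝ) + 1 / 2) * Real.log ((n : ℝ) + 1 / 2) - ((n : ℝ) + 1 / 2)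
      + Real.log (Real.sqrt (2 * π)))

lemma dSeq_succ_sub (n : ℕ) :
    dSeq (n + 1) - dSeq n =
      1 + Real.log ((n : ℝ) + 1) - ((n : ℝ) + 3/2) * Real.log ((n : ℝ) + 3/2)
        + ((n : ℝ) + 1/2) * Real.log ((n : ℝ) + 1/2) := by
  have hfac : (0:ℝ) < (n.factorial : ℝ) := by
    exact_mod_cast n.factorial_pos
  have h1 : (((n + 1).factorial : ℕ) : ℝ) = ((n : ℝ) + 1) * (n.factorial : ℝ) := by
    rw [Nat.factorial_succ]; push_cast; ring
  have h2 : Real.log (((n + 1).factorial : ℕ) : ℝ)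
      = Real.log ((n:ℝ)+1) + Real.log (n.factorial : ℝ) := by
    rw [h1, Real.log_mul (by positivity) hfac.ne']
  simp only [dSeq, h2]
  push_cast
  have e1 : (n:ℝ) + 1 + 1/2 = (n:ℝ) + 3/2 := by ring
  rw [e1]
  ring

lemma hasSum_gap (n : ℕ) :
    HasSum (fun k : ℕ => (((1 : ℝ) / (2 * (n:ℝ) + 2)) ^ 2) ^ (k + 1) *
        (1 / (2 * (k:ℝ) + 2) - 1 / (2 * (k:ℝ) + 3)))
      (dSeq (n + 1) - dSeq n) := by
  set t : ℝ := 1 / (2 * (n:ℝ) + 2) with ht_def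
  have hn0 : (0:ℝ) ≤ (n:ℝ) := n.cast_nonneg
  have htpos : 0 < t := by positivity
  have ht1 : t < 1 := by
    rw [ht_def, div_lt_one (by linarith)]; linarith
  have habs : |t| < 1 := by rwa [abs_of_pos htpos]
  have habs2 : |t ^ 2| < 1 := by
    rw [abs_of_nonneg (sq_nonneg t)]; nlinarith
  have h1 := (Real.hasSum_log_sub_log_of_abs_lt_one habs).mul_left (1 / (2 * t))
  have hfun1 : (fun k : ℕ => 1 / (2 * t) * (2 * (1 / (2 * (k:ℝ) + 1)) * t ^ (2 * k + 1)))
      = fun k : ℕ => (t ^ 2) ^ k * (1 / (2 * (k:ℝ) + 1)) := by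
    funext k
    have hp : t ^ (2 * k + 1) = (t ^ 2) ^ k * t := by
      rw [pow_succ, pow_mul]
    rw [hp]
    have h2k : (0:ℝ) < 2 * (k:ℝ) + 1 := by positivity
    field_simp
  rw [hfun1] at h1
  have h1'' := (hasSum_nat_add_iff'
      (f := fun k : ℕ => (t ^ 2) ^ k * (1 / (2 * (k:ℝ) + 1))) 1).mpr h1
  have hfun2 : (fun k : ℕ => (t ^ 2) ^ (k + 1) * (1 / (2 * ((k:ℕ)+1 : ℕ) + 1 : ℝ)))
      = fun k : ℕ => (t ^ 2) ^ (k + 1) * (1 / (2 * (k:ℝ) + 3)) := by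
    funext k; push_cast; ring_nf
  simp only [Finset.range_one, Finset.sum_singleton, pow_zero, Nat.cast_zero] at h1''
  norm_num at h1''
  have h2 := (Real.hasSum_pow_div_log_of_abs_lt_one habs2).mul_left (1/2)
  have hG := h2.sub h1''
  rw [dSeq_succ_sub n]
  convert hG using 1
  · rfl
  · funext k
    have hk0 : (0:ℝ) < (k:ℝ) + 1 := by positivity
    push_cast
    field_simp
    ring
  · -- value equality
    have ha : (1:ℝ) + t = ((n:ℝ) + 3/2) / ((n:ℝ) + 1) := by
      rw [ht_def]; field_simp; ring
    have hb : (1:ℝ) - t = ((n:ℝ) + 1/2) / ((n:ℝ) + 1) := by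
      rw [ht_def]; field_simp; ring
    have hloga : Real.log (1 + t) = Real.log ((n:ℝ) + 3/2) - Real.log ((n:ℝ) + 1) := by
      rw [ha, Real.log_div (by positivity) (by positivity)]
    have hlogb : Real.log (1 - t) = Real.log ((n:ℝ) + 1/2) - Real.log ((n:ℝ) + 1) := by
      rw [hb, Real.log_div (by positivity) (by positivity)]
    have hlogc : Real.log (1 - t ^ 2) = Real.log (1 + t) + Real.log (1 - t) := by
      rw [show (1:ℝ) - t ^ 2 = (1 + t) * (1 - t) by ring,
        Real.log_mul (by positivity) (by nlinarith)]
    have h2t : t⁻¹ = 2 * (n:ℝ) + 2 := by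
      rw [ht_def]; field_simp
    rw [hlogc, hloga, hlogb, h2t]
    ring

lemma gap_lb (n : ℕ) : 1 / (24 * ((n:ℝ) + 1) ^ 2) ≤ dSeq (n + 1) - dSeq n := by
  have h := hasSum_gap n
  have hterm : ∀ j : ℕ, 0 ≤ (((1 : ℝ) / (2 * (n:ℝ) + 2)) ^ 2) ^ (j + 1) *
      (1 / (2 * (j:ℝ) + 2) - 1 / (2 * (j:ℝ) + 3)) := by
    intro j
    apply mul_nonneg (by positivity)
    rw [sub_nonneg]
    exact one_div_le_one_div_of_le (by positivity) (by linarith)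
  have h0 := le_hasSum h 0 (fun j _ => hterm j)
  refine le_trans (le_of_eq ?_) h0
  have hn0 : (0:ℝ) < (n:ℝ) + 1 := by positivity
  push_cast
  field_simp
  ring

lemma gap_ub (n : ℕ) :
    dSeq (n + 1) - dSeq n ≤ 1 / (24 * ((n:ℝ) + 1/2) * ((n:ℝ) + 3/2)) := by
  have h := hasSum_gap n
  set r : ℝ := ((1 : ℝ) / (2 * (n:ℝ) + 2)) ^ 2 with hr_def
  have hn0 : (0:ℝ) ≤ (n:ℝ) := n.cast_nonneg
  have hr0 : 0 ≤ r := by positivity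
  have hr1 : r < 1 := by
    rw [hr_def]
    have : (1 : ℝ) / (2 * (n:ℝ) + 2) < 1 := by
      rw [div_lt_one (by linarith)]; linarith
    nlinarith [this, (by positivity : (0:ℝ) < 1 / (2 * (n:ℝ) + 2))]
  have hgeo := (hasSum_geometric_of_lt_one hr0 hr1).mul_left (r / 6)
  have hle : ∀ k : ℕ, r ^ (k + 1) * (1 / (2 * (k:ℝ) + 2) - 1 / (2 * (k:ℝ) + 3))
      ≤ r / 6 * r ^ k := by
    intro k
    have hk0 : (0:ℝ) ≤ (k:ℝ) := k.cast_nonneg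
    have hc : 1 / (2 * (k:ℝ) + 2) - 1 / (2 * (k:ℝ) + 3) ≤ 1 / 6 := by
      rw [div_sub_div _ _ (by positivity : (2 * (k:ℝ) + 2) ≠ 0)
        (by positivity : (2 * (k:ℝ) + 3) ≠ 0),
        div_le_div_iff₀ (by positivity) (by norm_num)]
      nlinarith
    calc r ^ (k + 1) * (1 / (2 * (k:ℝ) + 2) - 1 / (2 * (k:ℝ) + 3))
        ≤ r ^ (k + 1) * (1 / 6) := by
          apply mul_le_mul_of_nonneg_left hc (by positivity)
      _ = r / 6 * r ^ k := by rw [pow_succ]; ring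
  have := hasSum_le hle h hgeo
  refine this.trans (le_of_eq ?_)
  have h5 : (1:ℝ) - r = ((2*(n:ℝ)+1)*(2*(n:ℝ)+3))/((2*(n:ℝ)+2)^2) := by
    rw [hr_def]; field_simp; ring
  rw [h5, hr_def, inv_div]
  have h1 : (2*(n:ℝ)+1) ≠ 0 := by positivity
  have h2 : (2*(n:ℝ)+3) ≠ 0 := by positivity
  have h3 : (2*(n:ℝ)+2) ≠ 0 := by positivity
  have h6 : ((n:ℝ)+1/2) ≠ 0 := by positivity
  have h7 : ((n:ℝ)+3/2) ≠ 0 := by positivity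
  field_simp
  ring

lemma tendsto_dSeq : Tendsto dSeq atTop (𝓝 0) := by
  have hpi : (0:ℝ) < Real.sqrt π := Real.sqrt_pos.mpr Real.pi_pos
  have hA : Tendsto (fun n : ℕ => Real.log (Stirling.stirlingSeq n) - Real.log (Real.sqrt π))
      atTop (𝓝 0) := by
    have h := ((Real.continuousAt_log hpi.ne').tendsto).comp Stirling.tendsto_stirlingSeq_sqrt_pi
    have := h.sub_const (Real.log (Real.sqrt π))
    simpa using this
  have hB : Tendsto (fun n : ℕ => (n:ℝ) * Real.log (1 + (1/2) / (n:ℝ))) atTop (𝓝 (1/2)) :=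
    (Real.tendsto_mul_log_one_add_div_atTop (1/2)).comp tendsto_natCast_atTop_atTop
  have hC : Tendsto (fun n : ℕ => Real.log (1 + (1/2) / (n:ℝ))) atTop (𝓝 0) := by
    have h0 : Tendsto (fun n : ℕ => (1/2 : ℝ) / (n:ℝ)) atTop (𝓝 0) :=
      tendsto_const_nhds.div_atTop tendsto_natCast_atTop_atTop
    have h1 : Tendsto (fun n : ℕ => 1 + (1/2) / (n:ℝ)) atTop (𝓝 1) := by
      simpa using tendsto_const_nhds.add h0
    have := ((Real.continuousAt_log (by norm_num : (1:ℝ) ≠ 0)).tendsto).comp h1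
    rw [Real.log_one] at this; exact this
  have hF : Tendsto (fun n : ℕ => (Real.log (Stirling.stirlingSeq n) - Real.log (Real.sqrt π))
      + (1/2 - ((n:ℝ) * Real.log (1 + (1/2)/(n:ℝ)) + 1/2 * Real.log (1 + (1/2)/(n:ℝ)))))
      atTop (𝓝 0) := by
    have h' := hA.add
      ((tendsto_const_nhds (x := (1/2 : ℝ)) (f := atTop)).sub (hB.add (hC.const_mul (1/2))))
    norm_num at h'
    exact h'
  refine Tendsto.congr' ?_ hF
  filter_upwards [eventually_ge_atTop 1] with n hn
  have hn0 : (0:ℝ) < (n:ℝ) := by exact_mod_cast Nat.lt_of_lt_of_le Nat.zero_lt_one hn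
  have e1 : (1:ℝ) + (1/2)/(n:ℝ) = ((n:ℝ)+1/2)/(n:ℝ) := by field_simp
  have e2 : Real.log (1+(1/2)/(n:ℝ)) = Real.log ((n:ℝ)+1/2) - Real.log (n:ℝ) := by
    rw [e1, Real.log_div (by positivity) hn0.ne']
  have e3 := Stirling.log_stirlingSeq_formula n
  have e4 : Real.log ((n:ℝ)/Real.exp 1) = Real.log (n:ℝ) - 1 := by
    rw [Real.log_div hn0.ne' (Real.exp_ne_zero 1), Real.log_exp]
  have e5 : Real.log (2*(n:ℝ)) = Real.log 2 + Real.log (n:ℝ) :=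
    Real.log_mul two_ne_zero hn0.ne'
  have e6 : Real.log (Real.sqrt (2*π)) = (Real.log 2 + Real.log π)/2 := by
    rw [Real.log_sqrt (by positivity), Real.log_mul two_ne_zero Real.pi_ne_zero]
  have e7 : Real.log (Real.sqrt π) = Real.log π / 2 := by
    rw [Real.log_sqrt Real.pi_pos.le]
  simp only [dSeq]
  rw [e2, e3, e4, e5, e6, e7]
  ring

lemma aux_inv_tendsto (b : ℝ) : Tendsto (fun m : ℕ => 1 / (24 * ((m:ℝ) + b))) atTop (𝓝 0) := by
  have h1 : Tendsto (fun m : ℕ => 24 * ((m:ℝ) + b)) atTop atTop :=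
    (tendsto_atTop_add_const_right _ b tendsto_natCast_atTop_atTop).const_mul_atTop (by norm_num)
  exact h1.inv_tendsto_atTop.congr fun m => (one_div _).symm

lemma dSeq_lb (n : ℕ) : -(1 / (24 * ((n:ℝ) + 1/2))) ≤ dSeq n := by
  have hmono : Antitone (fun m : ℕ => dSeq m + 1 / (24 * ((m:ℝ) + 1/2))) := by
    apply antitone_nat_of_succ_le
    intro m
    have hgap := gap_ub m
    have hm0 : (0:ℝ) ≤ (m:ℝ) := m.cast_nonneg
    push_cast
    have key : 1 / (24 * ((m:ℝ) + 1/2)) - 1 / (24 * ((m:ℝ) + 1 + 1/2))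
        = 1 / (24 * ((m:ℝ) + 1/2) * ((m:ℝ) + 3/2)) := by
      field_simp
      ring
    linarith
  have hlim : Tendsto (fun m : ℕ => dSeq m + 1 / (24 * ((m:ℝ) + 1/2))) atTop (𝓝 0) := by
    simpa using tendsto_dSeq.add (aux_inv_tendsto (1/2))
  have := hmono.le_of_tendsto hlim n
  linarith

lemma dSeq_ub (n : ℕ) : dSeq n ≤ -(1 / (24 * ((n:ℝ) + 1))) := by
  have hmono : Monotone (fun m : ℕ => dSeq m + 1 / (24 * ((m:ℝ) + 1))) := by
    apply monotone_nat_of_le_succ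
    intro m
    have hgap := gap_lb m
    have hm0 : (0:ℝ) ≤ (m:ℝ) := m.cast_nonneg
    push_cast
    have key : 1 / (24 * ((m:ℝ) + 1)) - 1 / (24 * ((m:ℝ) + 1 + 1))
        = 1 / (24 * ((m:ℝ) + 1) * ((m:ℝ) + 2)) := by
      field_simp
      ring
    have h2 : 1 / (24 * ((m:ℝ) + 1) * ((m:ℝ) + 2)) ≤ 1 / (24 * ((m:ℝ) + 1) ^ 2) := by
      apply one_div_le_one_div_of_le (by positivity)
      nlinarith
    linarith
  have hlim : Tendsto (fun m : ℕ => dSeq m + 1 / (24 * ((m:ℝ) + 1))) atTop (𝓝 0) := by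
    simpa using tendsto_dSeq.add (aux_inv_tendsto 1)
  have := hmono.ge_of_tendsto hlim n
  linarith

theorem stirling_half_integer_first_correction' :
    Tendsto (fun n : ℕ => ((n : ℝ) + 1 / 2) * dSeq n) atTop (nhds (-1 / 24)) := by
  have hlow : ∀ n : ℕ, -1/24 ≤ ((n:ℝ)+1/2) * dSeq n := by
    intro n
    have h := dSeq_lb n
    have hpos : (0:ℝ) < (n:ℝ) + 1/2 := by positivity
    have hmul := mul_le_mul_of_nonneg_left h hpos.le
    have heq : ((n:ℝ)+1/2) * (-(1 / (24 * ((n:ℝ) + 1/2)))) = -1/24 := by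
      field_simp
    linarith
  have hupp : ∀ n : ℕ, ((n:ℝ)+1/2) * dSeq n ≤ -1/24 + (1/48) * (1/((n:ℝ)+1)) := by
    intro n
    have h := dSeq_ub n
    have hpos : (0:ℝ) < (n:ℝ) + 1/2 := by positivity
    have hmul := mul_le_mul_of_nonneg_left h hpos.le
    have heq : ((n:ℝ)+1/2) * (-(1 / (24 * ((n:ℝ) + 1)))) = -1/24 + (1/48) * (1/((n:ℝ)+1)) := by
      field_simp
      ring
    linarith
  have hub_lim : Tendsto (fun n : ℕ => -1/24 + (1/48) * (1/((n:ℝ)+1))) atTop (𝓝 (-1/24)) := by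
    have h1 : Tendsto (fun n : ℕ => ((n:ℝ) + 1)) atTop atTop :=
      tendsto_atTop_add_const_right _ 1 tendsto_natCast_atTop_atTop
    have h2 := h1.inv_tendsto_atTop
    have h3 : Tendsto (fun n : ℕ => (1/48 : ℝ) * (1/((n:ℝ)+1))) atTop (𝓝 0) := by
      simpa [one_div] using h2.const_mul (1/48 : ℝ)
    simpa using (tendsto_const_nhds (x := (-1/24 : ℝ)) (f := atTop)).add h3
  exact tendsto_of_tendsto_of_tendsto_of_le_of_le tendsto_const_nhds hub_lim hlow hupp

/-- First-order correction in Stirling's original series: with `z = n + 1/2`,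
`z (log(n!) - (z log z - z + log √(2π))) → -1/24`. -/
theorem stirling_half_integer_first_correction :
    Tendsto (fun n : ℕ =>
        ((n : ℝ) + 1 / 2) *
          (Real.log (n.factorial : ℝ) -
            (((n : ℝ) + 1 / 2) * Real.log ((n : ℝ) + 1 / 2) - ((n : ℝ) + 1 / 2)
              + Real.log (Real.sqrt (2 * π)))))
      atTop (nhds (-1 / 24)) :=
  stirling_half_integer_first_correction'
end

section
/- Stirling's coefficient identities: for every natural number n ≥ 1, ∑_{k=1}^{n} binom(2n-1, 2k-2) · (1 - 2^{2k-1}) · B_{2k} / (2k(2k-1)) = -1 / (4n(2n+1)). In particular the coefficients a_{2k-1} = (1 - 2^{2k-1}) B_{2k}/(2k(2k-1)) (namely a_1 = -1/12, a_3 = 7/360, a_5 = -31/1260, ...) solve Stirling's triangular system of linear equations. -/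
open Finset

lemma aux_sum_range_two_mul (g : ℕ → ℚ) (N : ℕ) :
    ∑ j ∈ Finset.range (2 * N), g j
      = ∑ k ∈ Finset.range N, (g (2 * k) + g (2 * k + 1)) := by
  induction N with
  | zero => simp
  | succ N ih =>
      have h : 2 * (N + 1) = (2 * N + 1) + 1 := by ring
      rw [h, Finset.sum_range_succ, Finset.sum_range_succ, ih, Finset.sum_range_succ]
      ring

lemma bernoulli_odd_zero {j : ℕ} (h : Odd j) (h1 : 1 < j) : bernoulli j = 0 := by
  rw [bernoulli_eq_bernoulli'_of_ne_one (by omega)]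
  exact bernoulli'_eq_zero_of_odd h h1

lemma bernoulli_eval_nat_reflect (n : ℕ) (m : ℕ) :
    (Polynomial.bernoulli n).eval (1 - (m : ℚ))
      = (-1) ^ n * (Polynomial.bernoulli n).eval (m : ℚ) := by
  induction m with
  | zero =>
      simp [Polynomial.bernoulli_eval_one, Polynomial.bernoulli_eval_zero,
        bernoulli'_eq_bernoulli]
  | succ m ih =>
      have h1 := Polynomial.bernoulli_eval_one_add n (-(m : ℚ))
      have h2 := Polynomial.bernoulli_eval_one_add n (m : ℚ)
      have hpow : -((n : ℚ) * (-(m : ℚ)) ^ (n - 1)) = (-1) ^ n * ((n : ℚ) * (m : ℚ) ^ (n - 1)) := by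
        cases n with
        | zero => simp
        | succ d =>
            rw [Nat.add_sub_cancel, neg_pow, pow_succ]
            ring
      have e3 : (1 : ℚ) + -(m : ℚ) = 1 - (m : ℚ) := by ring
      rw [e3, ih] at h1
      push_cast
      have e1 : (1 : ℚ) - ((m : ℚ) + 1) = -(m : ℚ) := by ring
      have e2 : ((m : ℚ) + 1) = 1 + (m : ℚ) := by ring
      rw [e1, e2, h2]
      have h1' : (Polynomial.bernoulli n).eval (-(m : ℚ))
          = (-1) ^ n * (Polynomial.bernoulli n).eval (m : ℚ) - (n : ℚ) * (-(m : ℚ)) ^ (n - 1) := by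
        linarith [h1]
      rw [h1']
      linear_combination hpow

lemma bernoulli_poly_reflect (n : ℕ) (x : ℚ) :
    (Polynomial.bernoulli n).eval (1 - x) = (-1) ^ n * (Polynomial.bernoulli n).eval x := by
  have key : (Polynomial.bernoulli n).comp (Polynomial.C 1 - Polynomial.X)
      = (-1 : ℚ) ^ n • Polynomial.bernoulli n := by
    apply Polynomial.eq_of_infinite_eval_eq
    apply Set.infinite_of_injective_forall_mem (f := fun m : ℕ => (m : ℚ))
      (Nat.cast_injective)
    intro m
    simp only [Set.mem_setOf_eq, Polynomial.eval_comp, Polynomial.eval_sub, Polynomial.eval_C,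
      Polynomial.eval_X, Polynomial.eval_smul, smul_eq_mul]
    exact bernoulli_eval_nat_reflect n m
  have := congrArg (Polynomial.eval x) key
  simpa [Polynomial.eval_comp, Polynomial.eval_smul, smul_eq_mul] using this

lemma bernoulli_poly_eval_half {n : ℕ} (hn : Odd n) :
    (Polynomial.bernoulli n).eval (1 / 2 : ℚ) = 0 := by
  have h := bernoulli_poly_reflect n (1 / 2)
  rw [hn.neg_one_pow] at h
  norm_num at h
  linarith

lemma sum_choose_two_pow_bernoulli {n : ℕ} (hn : Odd n) :
    ∑ j ∈ Finset.range (n + 1), (n.choose j : ℚ) * 2 ^ j * bernoulli j = 0 := by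
  have h0 : (Polynomial.bernoulli n).eval (1 / 2 : ℚ) = 0 := bernoulli_poly_eval_half hn
  have h1 : (Polynomial.bernoulli n).eval (1 / 2 : ℚ)
      = ∑ j ∈ Finset.range (n + 1), bernoulli j * (n.choose j : ℚ) * (1 / 2 : ℚ) ^ (n - j) := by
    simp [Polynomial.bernoulli, Polynomial.eval_finset_sum, Polynomial.eval_monomial]
  have h2 : ∑ j ∈ Finset.range (n + 1), (n.choose j : ℚ) * 2 ^ j * bernoulli j
      = 2 ^ n * ∑ j ∈ Finset.range (n + 1),
          bernoulli j * (n.choose j : ℚ) * (1 / 2 : ℚ) ^ (n - j) := by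
    rw [Finset.mul_sum]
    refine Finset.sum_congr rfl fun j hj => ?_
    have hjn : j ≤ n := Finset.mem_range_succ_iff.mp hj
    have hp : (2 : ℚ) ^ n = 2 ^ (n - j) * 2 ^ j := by
      rw [← pow_add]; congr 1; omega
    rw [hp, one_div, inv_pow]
    have h2j : ((2 : ℚ) ^ (n - j)) ≠ 0 := by positivity
    field_simp
  rw [h2, ← h1, h0, mul_zero]

lemma key_sum (m : ℕ) :
    ∑ k ∈ Finset.range (m + 1),
        ((2 * m + 3).choose (2 * k + 2) : ℚ) * (1 - 2 ^ (2 * k + 1)) * bernoulli (2 * k + 2)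
      = -(1 / 2) := by
  set M := 2 * m + 3 with hM
  have hModd : Odd M := ⟨m + 1, by omega⟩
  have hA : ∑ j ∈ Finset.range (M + 1), (M.choose j : ℚ) * bernoulli j = 0 := by
    rw [Finset.sum_range_succ, sum_bernoulli, if_neg (by omega : ¬ M = 1),
      bernoulli_odd_zero hModd (by omega)]
    simp
  have hB : ∑ j ∈ Finset.range (M + 1), (M.choose j : ℚ) * 2 ^ j * bernoulli j = 0 :=
    sum_choose_two_pow_bernoulli hModd
  set g : ℕ → ℚ := fun j => (M.choose j : ℚ) * (1 - 2 ^ j / 2) * bernoulli j with hg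
  have hgsum : ∑ j ∈ Finset.range (M + 1), g j = 0 := by
    have hsplit : ∀ j ∈ Finset.range (M + 1), g j
        = (M.choose j : ℚ) * bernoulli j
          - (1 / 2) * ((M.choose j : ℚ) * 2 ^ j * bernoulli j) := by
      intro j _
      simp only [hg]
      ring
    rw [Finset.sum_congr rfl hsplit, Finset.sum_sub_distrib, hA, ← Finset.mul_sum, hB]
    ring
  have hMe : M + 1 = 2 * (m + 2) := by omega
  rw [hMe, aux_sum_range_two_mul g (m + 2)] at hgsum
  have hodd : ∀ k, g (2 * k + 1) = 0 := by
    intro k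
    rcases Nat.eq_zero_or_pos k with hk | hk
    · subst hk
      simp [hg]
    · have hb : bernoulli (2 * k + 1) = 0 := bernoulli_odd_zero ⟨k, rfl⟩ (by omega)
      simp [hg, hb]
  have heven : ∑ k ∈ Finset.range (m + 2), g (2 * k) = 0 := by
    simpa [hodd] using hgsum
  rw [Finset.sum_range_succ'] at heven
  have hg0 : g (2 * 0) = 1 / 2 := by norm_num [hg]
  have hterm : ∀ k ∈ Finset.range (m + 1),
      ((2 * m + 3).choose (2 * k + 2) : ℚ) * (1 - 2 ^ (2 * k + 1)) * bernoulli (2 * k + 2)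
        = g (2 * (k + 1)) := by
    intro k _
    have e : 2 * (k + 1) = 2 * k + 2 := by ring
    simp only [hg, e, pow_succ]
    ring
  rw [Finset.sum_congr rfl hterm]
  linarith [heven, hg0]

/-- Stirling's coefficient identities: for `n ≥ 1`,
`∑_{k=1}^{n} binom(2n-1, 2k-2) (1 - 2^{2k-1}) B_{2k}/(2k(2k-1)) = -1/(4n(2n+1))`,
so the coefficients `a_{2k-1} = (1 - 2^{2k-1}) B_{2k}/(2k(2k-1))` solve Stirling's
triangular system. -/
theorem stirling_coefficient_identity (n : ℕ) (hn : 1 ≤ n) :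
    ∑ k ∈ Finset.Icc 1 n,
        (((2 * n - 1).choose (2 * k - 2) : ℕ) : ℚ) * (1 - 2 ^ (2 * k - 1)) *
          bernoulli (2 * k) / ((2 * (k : ℚ)) * (2 * (k : ℚ) - 1)) =
      -1 / (4 * (n : ℚ) * (2 * (n : ℚ) + 1)) := by
  obtain ⟨m, rfl⟩ : ∃ m, n = m + 1 := ⟨n - 1, by omega⟩
  rw [← Finset.Ico_add_one_right_eq_Icc, Finset.sum_Ico_eq_sum_range]
  have hrange : m + 1 + 1 - 1 = m + 1 := by omega
  rw [hrange]
  have hterm : ∀ i ∈ Finset.range (m + 1),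
      (((2 * (m + 1) - 1).choose (2 * (1 + i) - 2) : ℕ) : ℚ) * (1 - 2 ^ (2 * (1 + i) - 1)) *
          bernoulli (2 * (1 + i)) / ((2 * ((1 + i : ℕ) : ℚ)) * (2 * ((1 + i : ℕ) : ℚ) - 1))
        = (((2 * m + 3).choose (2 * i + 2) : ℚ) * (1 - 2 ^ (2 * i + 1)) *
            bernoulli (2 * i + 2)) / ((2 * ((m : ℚ) + 1)) * (2 * ((m : ℚ) + 1) + 1)) := by
    intro i _
    have e1 : 2 * (m + 1) - 1 = 2 * m + 1 := by omega
    have e2 : 2 * (1 + i) - 2 = 2 * i := by omega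
    have e3 : 2 * (1 + i) - 1 = 2 * i + 1 := by omega
    have e4 : 2 * (1 + i) = 2 * i + 2 := by omega
    rw [e1, e2, e3, e4]
    have h1 : (2 * m + 3) * (2 * m + 2).choose (2 * i + 1)
        = (2 * m + 3).choose (2 * i + 2) * (2 * i + 2) := by
      have h := Nat.add_one_mul_choose_eq (2 * m + 2) (2 * i + 1)
      rw [show 2 * m + 2 + 1 = 2 * m + 3 from by omega,
        show 2 * i + 1 + 1 = 2 * i + 2 from by omega] at h
      exact h
    have h2 : (2 * m + 2) * (2 * m + 1).choose (2 * i)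
        = (2 * m + 2).choose (2 * i + 1) * (2 * i + 1) := by
      have h := Nat.add_one_mul_choose_eq (2 * m + 1) (2 * i)
      rw [show 2 * m + 1 + 1 = 2 * m + 2 from by omega,
        show 2 * i + 1 = 2 * i + 1 from by omega] at h
      exact h
    have hc : (2 * m + 3).choose (2 * i + 2) * ((2 * i + 2) * (2 * i + 1))
        = ((2 * m + 3) * (2 * m + 2)) * ((2 * m + 1).choose (2 * i)) := by
      calc (2 * m + 3).choose (2 * i + 2) * ((2 * i + 2) * (2 * i + 1))
          = ((2 * m + 3).choose (2 * i + 2) * (2 * i + 2)) * (2 * i + 1) := by ring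
        _ = ((2 * m + 3) * (2 * m + 2).choose (2 * i + 1)) * (2 * i + 1) := by rw [h1]
        _ = (2 * m + 3) * ((2 * m + 2).choose (2 * i + 1) * (2 * i + 1)) := by ring
        _ = (2 * m + 3) * ((2 * m + 2) * (2 * m + 1).choose (2 * i)) := by rw [← h2]
        _ = ((2 * m + 3) * (2 * m + 2)) * ((2 * m + 1).choose (2 * i)) := by ring
    have hcq : ((2 * m + 3).choose (2 * i + 2) : ℚ) * ((2 * i + 2) * (2 * i + 1))
        = ((2 * m + 3) * (2 * m + 2)) * ((2 * m + 1).choose (2 * i) : ℚ) := by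
      exact_mod_cast hc
    have hd1 : (2 * ((1 + i : ℕ) : ℚ)) * (2 * ((1 + i : ℕ) : ℚ) - 1) ≠ 0 := by
      have hi : (0 : ℚ) ≤ (i : ℚ) := Nat.cast_nonneg i
      have : ((1 + i : ℕ) : ℚ) = 1 + (i : ℚ) := by push_cast; ring
      rw [this]
      have h1' : (0 : ℚ) < 2 * (1 + (i : ℚ)) := by linarith
      have h2' : (0 : ℚ) < 2 * (1 + (i : ℚ)) - 1 := by linarith
      exact mul_ne_zero (ne_of_gt h1') (ne_of_gt h2')
    have hd2 : (2 * ((m : ℚ) + 1)) * (2 * ((m : ℚ) + 1) + 1) ≠ 0 := by positivity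
    rw [div_eq_div_iff hd1 hd2]
    push_cast at hcq ⊢
    linear_combination (-(1 - 2 ^ (2 * i + 1)) * bernoulli (2 * i + 2)) * hcq
  rw [Finset.sum_congr rfl hterm, ← Finset.sum_div, key_sum m]
  push_cast
  have hm : (0 : ℚ) ≤ (m : ℚ) := Nat.cast_nonneg m
  field_simp
  ring
end

section
/- Bayes's divergence theorem: for every real x > 0, the terms B_{2k} / (2k(2k-1) x^{2k-1}) of Stirling's series tend to infinity in absolute value as k → ∞; in particular the series ∑_{k=1}^{∞} B_{2k} / (2k(2k-1) x^{2k-1}) is not summable. -/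
open Filter Real Nat

lemma bayes_fact_div_pow (c : ℝ) (hc : 0 < c) :
    Tendsto (fun n : ℕ => (n ! : ℝ) / c ^ n) atTop atTop := by
  have h : Tendsto (fun n : ℕ => c ^ n / (n ! : ℝ)) atTop (nhdsWithin 0 (Set.Ioi 0)) :=
    tendsto_nhdsWithin_of_tendsto_nhds_of_eventually_within _
      (FloorSemiring.tendsto_pow_div_factorial_atTop c)
      (Eventually.of_forall fun n => Set.mem_Ioi.mpr (by
        have : (0:ℝ) < (n ! : ℝ) := by exact_mod_cast n.factorial_pos
        positivity))
  exact h.inv_tendsto_nhdsGT_zero.congr fun n => by simp [Pi.inv_apply, inv_div]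

lemma bayes_bern_lb (k : ℕ) (hk : k ≠ 0) :
    ((2 * k)! : ℝ) / (2 ^ (2 * k - 1) * π ^ (2 * k)) ≤
      |((bernoulli (2 * k) : ℚ) : ℝ)| := by
  have h := hasSum_zeta_nat hk
  set S : ℝ := (-1 : ℝ) ^ (k + 1) * (2 : ℝ) ^ (2 * k - 1) * π ^ (2 * k) *
      bernoulli (2 * k) / (2 * k)! with hS
  have h1 : (1 : ℝ) ≤ S := by
    have := le_hasSum h 1 (fun j _ => by positivity)
    simpa using this
  have habs : |S| = 2 ^ (2 * k - 1) * π ^ (2 * k) * |((bernoulli (2 * k) : ℚ) : ℝ)|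
      / (2 * k)! := by
    rw [hS, abs_div, abs_mul, abs_mul, abs_mul, abs_pow, abs_pow, abs_pow, abs_neg,
      abs_one, one_pow, one_mul, abs_two, abs_of_nonneg pi_pos.le,
      Nat.abs_cast]
  have hfac : (0:ℝ) < ((2 * k)! : ℝ) := by exact_mod_cast (2 * k).factorial_pos
  have hpow : (0:ℝ) < 2 ^ (2 * k - 1) * π ^ (2 * k) := by positivity
  have h2 : (1 : ℝ) ≤ 2 ^ (2 * k - 1) * π ^ (2 * k) * |((bernoulli (2 * k) : ℚ) : ℝ)|
      / (2 * k)! := by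
    rw [← habs]; exact h1.trans (le_abs_self S)
  rw [le_div_iff₀ hfac, one_mul] at h2
  rw [div_le_iff₀' hpow]
  linarith

/-- Bayes's divergence theorem: for `x > 0`, the terms `B_{2k}/(2k(2k-1) x^{2k-1})`
of Stirling's series tend to infinity in absolute value, and in particular the
series is not summable. -/
theorem bayes_divergence (x : ℝ) (hx : 0 < x) :
    Tendsto (fun k : ℕ =>
        |((bernoulli (2 * (k + 1)) : ℚ) : ℝ) /
          ((2 * ((k : ℝ) + 1)) * (2 * ((k : ℝ) + 1) - 1) * x ^ (2 * (k + 1) - 1))|)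
      atTop atTop ∧
    ¬ Summable (fun k : ℕ =>
        ((bernoulli (2 * (k + 1)) : ℚ) : ℝ) /
          ((2 * ((k : ℝ) + 1)) * (2 * ((k : ℝ) + 1) - 1) * x ^ (2 * (k + 1) - 1))) := by
  have hpi := pi_pos
  set g : ℕ → ℝ := fun k => (1 / (2 * π ^ 2 * x)) * (((2 * k)! : ℝ) / (2 * π * x) ^ (2 * k))
    with hg
  have hgtop : Tendsto g atTop atTop := by
    have h1 : Tendsto (fun n : ℕ => (n ! : ℝ) / (2 * π * x) ^ n) atTop atTop :=
      bayes_fact_div_pow _ (by positivity)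
    have h2 : Tendsto (fun k : ℕ => 2 * k) atTop atTop :=
      tendsto_atTop_mono (fun k => Nat.le_mul_of_pos_left k two_pos) tendsto_id
    exact (h1.comp h2).const_mul_atTop (by positivity)
  have key : ∀ k : ℕ, g k ≤
      |((bernoulli (2 * (k + 1)) : ℚ) : ℝ) /
        ((2 * ((k : ℝ) + 1)) * (2 * ((k : ℝ) + 1) - 1) * x ^ (2 * (k + 1) - 1))| := by
    intro k
    have he1 : 2 * (k + 1) - 1 = 2 * k + 1 := by omega
    have he2 : 2 * (k + 1) = 2 * k + 2 := by omega
    have hB := bayes_bern_lb (k + 1) (Nat.succ_ne_zero k)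
    rw [he1, he2] at hB
    rw [he1, he2]
    have hfac : ((2 * k + 2)! : ℝ) = (2 * (k:ℝ) + 2) * ((2 * (k:ℝ) + 1) * ((2 * k)! : ℝ)) := by
      have h' : (2 * k + 2)! = (2 * k + 2) * ((2 * k + 1) * (2 * k)!) := by
        rw [Nat.factorial_succ, Nat.factorial_succ]
      rw [h']; push_cast; ring
    have h21 : (0:ℝ) < 2 * ((k : ℝ) + 1) - 1 := by
      have : (0:ℝ) ≤ (k:ℝ) := Nat.cast_nonneg k
      linarith
    have hD : (0:ℝ) < (2 * ((k : ℝ) + 1)) * (2 * ((k : ℝ) + 1) - 1) * x ^ (2 * k + 1) := by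
      positivity
    rw [abs_div, abs_of_pos hD, le_div_iff₀ hD]
    refine le_trans (le_of_eq ?_) hB
    have hxne := hx.ne'
    have hpne := pi_ne_zero
    rw [hg]
    rw [hfac]
    field_simp
    ring
  refine ⟨tendsto_atTop_mono key hgtop, fun hs => ?_⟩
  have h0 : Tendsto (fun k : ℕ =>
      |((bernoulli (2 * (k + 1)) : ℚ) : ℝ) /
        ((2 * ((k : ℝ) + 1)) * (2 * ((k : ℝ) + 1) - 1) * x ^ (2 * (k + 1) - 1))|)
      atTop (nhds 0) := by
    simpa using hs.tendsto_atTop_zero.abs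
  exact not_tendsto_nhds_of_tendsto_atTop (tendsto_atTop_mono key hgtop) 0 h0
end

section
/- Euler's partial fraction expansion used by Schaar: for every real x ≠ 0, 1/(e^x - 1) = 1/x - 1/2 + ∑_{k=1}^{∞} 2x / (x² + 4k²π²), where the series on the right converges. -/
open Real

open MeasureTheory Set Filter Topology Asymptotics
open scoped FourierTransform


lemma integral_cexp_neg_Ioi' {a : ℂ} (ha : 0 < a.re) :
    ∫ t in Ioi (0:ℝ), Complex.exp (-a * t) = 1 / a := by
  have ha0 : a ≠ 0 := fun h => by simp [h] at ha
  have hint : IntegrableOn (fun t : ℝ => Complex.exp (-a * t)) (Ioi (0:ℝ)) := by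
    refine Integrable.mono' (exp_neg_integrableOn_Ioi 0 ha) ?_ ?_
    · exact (Complex.continuous_exp.comp (by continuity)).aestronglyMeasurable
    · filter_upwards with t
      simp [Complex.norm_exp]
  have h1 := intervalIntegral_tendsto_integral_Ioi 0 hint tendsto_id
  have h2 : ∀ b : ℝ, ∫ t in (0:ℝ)..b, Complex.exp (-a * t) =
      (Complex.exp (-a * b) - 1) / (-a) := by
    intro b
    rw [integral_exp_mul_complex (neg_ne_zero.mpr ha0)]
    simp
  have h3 : Filter.Tendsto (fun b : ℝ => (Complex.exp (-a * b) - 1) / (-a)) atTop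
      (𝓝 ((0 - 1) / (-a))) := by
    refine Tendsto.div_const (Tendsto.sub_const ?_ 1) _
    rw [tendsto_zero_iff_norm_tendsto_zero]
    have : ∀ b : ℝ, ‖Complex.exp (-a * b)‖ = Real.exp (-a.re * b) := by
      intro b; simp [Complex.norm_exp]
    simp_rw [this]
    exact Real.tendsto_exp_atBot.comp (tendsto_id.const_mul_atTop_of_neg (by linarith))
  simp_rw [h2] at h1
  have := tendsto_nhds_unique h1 h3
  rw [this]
  field_simp
  ring



lemma fourier_exp_abs {c : ℝ} (hc : 0 < c) (w : ℝ) :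
    𝓕 (fun t : ℝ => (Real.exp (-(c * |t|)) : ℂ)) w
      = ((2 * c / (c ^ 2 + 4 * π ^ 2 * w ^ 2) : ℝ) : ℂ) := by
  set A : ℂ := (c : ℂ) + 2 * π * w * Complex.I with hA_def
  set B : ℂ := (c : ℂ) - 2 * π * w * Complex.I with hB_def
  have hA : 0 < A.re := by simp [hA_def, hc]
  have hB : 0 < B.re := by simp [hB_def, hc]
  have hA0 : A ≠ 0 := fun h => by rw [h] at hA; simp at hA
  have hB0 : B ≠ 0 := fun h => by rw [h] at hB; simp at hB
  set F : ℝ → ℂ := fun v => Complex.exp (↑(-2 * π * v * w) * Complex.I) •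
      (Real.exp (-(c * |v|)) : ℂ) with hF_def
  have hcont : Continuous F := by
    apply Continuous.fun_smul
    · exact Complex.continuous_exp.comp (by continuity)
    · exact Complex.continuous_ofReal.comp (Real.continuous_exp.comp (by continuity))
  have hFpos : ∀ v ∈ Ioi (0:ℝ), F v = Complex.exp (-A * v) := by
    intro v hv
    rw [hF_def]
    simp only [smul_eq_mul, abs_of_pos (mem_Ioi.mp hv), Complex.ofReal_exp]
    rw [← Complex.exp_add]
    congr 1
    push_cast
    ring
  have hFneg : ∀ v ∈ Ioi (0:ℝ), F (-v) = Complex.exp (-B * v) := by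
    intro v hv
    rw [hF_def]
    simp only [smul_eq_mul, abs_neg, abs_of_pos (mem_Ioi.mp hv), Complex.ofReal_exp]
    rw [← Complex.exp_add]
    congr 1
    push_cast
    ring
  have hiA : IntegrableOn (fun v : ℝ => Complex.exp (-A * v)) (Ioi (0:ℝ)) := by
    refine Integrable.mono' (exp_neg_integrableOn_Ioi 0 hA) ?_ ?_
    · exact (Complex.continuous_exp.comp (by continuity)).aestronglyMeasurable
    · filter_upwards with t; simp [Complex.norm_exp]
  have hiB : IntegrableOn (fun v : ℝ => Complex.exp (-B * v)) (Ioi (0:ℝ)) := by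
    refine Integrable.mono' (exp_neg_integrableOn_Ioi 0 hB) ?_ ?_
    · exact (Complex.continuous_exp.comp (by continuity)).aestronglyMeasurable
    · filter_upwards with t; simp [Complex.norm_exp]
  have hIoi : IntegrableOn F (Ioi (0:ℝ)) :=
    (integrableOn_congr_fun hFpos measurableSet_Ioi).mpr hiA
  have hIic : IntegrableOn F (Iic (0:ℝ)) := by
    have himg : Iic (0:ℝ) = (fun x : ℝ => -x) '' Ici (0:ℝ) := by
      rw [Set.image_neg_eq_neg, neg_Ici, neg_zero]
    rw [himg, (Measure.measurePreserving_neg _).integrableOn_image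
      (Homeomorph.neg ℝ).isClosedEmbedding.measurableEmbedding]
    rw [integrableOn_Ici_iff_integrableOn_Ioi]
    exact (integrableOn_congr_fun (fun v hv => hFneg v hv) measurableSet_Ioi).mpr hiB
  have hsplit : ∫ v : ℝ, F v = (∫ v in Iic (0:ℝ), F v) + ∫ v in Ioi (0:ℝ), F v :=
    (intervalIntegral.integral_Iic_add_Ioi hIic hIoi).symm
  have h1 : ∫ v in Ioi (0:ℝ), F v = 1 / A := by
    rw [setIntegral_congr_fun measurableSet_Ioi hFpos, integral_cexp_neg_Ioi' hA]
  have h2 : ∫ v in Iic (0:ℝ), F v = 1 / B := by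
    have := integral_comp_neg_Ioi 0 F
    rw [neg_zero] at this
    rw [← this, setIntegral_congr_fun measurableSet_Ioi hFneg, integral_cexp_neg_Ioi' hB]
  rw [Real.fourier_real_eq_integral_exp_smul, ← hF_def, hsplit, h1, h2]
  have hd : ((c : ℂ) ^ 2 + 4 * π ^ 2 * w ^ 2) ≠ 0 := by
    have : (0:ℝ) < c ^ 2 + 4 * π ^ 2 * w ^ 2 := by positivity
    exact_mod_cast this.ne'
  have hAB : A * B = (c : ℂ) ^ 2 + 4 * (π : ℂ) ^ 2 * (w : ℂ) ^ 2 := by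
    rw [hA_def, hB_def]
    ring_nf
    rw [Complex.I_sq]
    ring
  rw [div_add_div _ _ hB0 hA0, mul_comm B A, hAB]
  push_cast
  rw [div_eq_div_iff (by push_cast at hd; exact_mod_cast hd) (by push_cast at hd; exact hd)]
  ring

lemma exp_abs_decay {c : ℝ} (hc : 0 < c) :
    (fun t : ℝ => (Real.exp (-(c * |t|)) : ℂ)) =O[cocompact ℝ]
      fun t : ℝ => |t| ^ (-(2:ℝ)) := by
  rw [isBigO_iff]
  refine ⟨6 / c ^ 3, ?_⟩
  have hev : ∀ᶠ t : ℝ in cocompact ℝ, 1 ≤ |t| := by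
    rw [cocompact_eq_atBot_atTop, eventually_sup]
    constructor
    · filter_upwards [eventually_le_atBot (-1 : ℝ)] with t ht
      rw [abs_of_nonpos (by linarith)]; linarith
    · filter_upwards [eventually_ge_atTop (1 : ℝ)] with t ht
      rw [abs_of_nonneg (by linarith)]; linarith
  filter_upwards [hev] with t ht
  have h0 : (0:ℝ) < |t| := by linarith
  have hbound : (c * |t|) ^ 3 / 6 ≤ Real.exp (c * |t|) := by
    have := Real.pow_div_factorial_le_exp (x := c * |t|) (by positivity) 3
    norm_num [Nat.factorial] at this
    exact this
  have hp : (0:ℝ) < (c * |t|) ^ 3 / 6 := by positivity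
  have h1 : Real.exp (-(c * |t|)) ≤ 6 / (c * |t|) ^ 3 := by
    rw [Real.exp_neg]
    calc (Real.exp (c * |t|))⁻¹ ≤ ((c * |t|) ^ 3 / 6)⁻¹ := inv_anti₀ hp hbound
      _ = 6 / (c * |t|) ^ 3 := by rw [inv_div]
  have hrw : |t| ^ (-(2:ℝ)) = (|t| ^ (2:ℕ))⁻¹ := by
    rw [← Real.rpow_natCast |t| 2, ← Real.rpow_neg h0.le]
    norm_num
  have h23 : |t| ^ (2:ℕ) ≤ |t| ^ (3:ℕ) := by nlinarith [abs_nonneg t]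
  have h2 : 6 / (c * |t|) ^ 3 ≤ 6 / c ^ 3 * (|t| ^ (2:ℕ))⁻¹ :=
    calc 6 / (c * |t|) ^ 3 = 6 / c ^ 3 * (|t| ^ (3:ℕ))⁻¹ := by
          rw [mul_pow]; ring
      _ ≤ 6 / c ^ 3 * (|t| ^ (2:ℕ))⁻¹ := by
          refine mul_le_mul_of_nonneg_left (inv_anti₀ (by positivity) h23) (by positivity)
  calc ‖(Real.exp (-(c * |t|)) : ℂ)‖ = Real.exp (-(c * |t|)) := by
        rw [Complex.norm_real, Real.norm_eq_abs, abs_of_pos (Real.exp_pos _)]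
    _ ≤ 6 / (c * |t|) ^ 3 := h1
    _ ≤ 6 / c ^ 3 * (|t| ^ (2:ℕ))⁻¹ := h2
    _ = 6 / c ^ 3 * ‖|t| ^ (-(2:ℝ))‖ := by
        rw [Real.norm_eq_abs, abs_of_nonneg (by positivity : (0:ℝ) ≤ |t| ^ (-(2:ℝ))), hrw]
lemma euler_pos {c : ℝ} (hc : 0 < c) :
    HasSum (fun k : ℕ => 2 * c / (c ^ 2 + 4 * ((k : ℝ) + 1) ^ 2 * π ^ 2))
      (1 / (Real.exp c - 1) - (1 / c - 1 / 2)) := by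
  set G : ℤ → ℝ := fun n => 2 * c / (c ^ 2 + 4 * π ^ 2 * (n : ℝ) ^ 2) with hG
  -- summability facts
  have hb : Summable (fun n : ℕ => 1 / ((n : ℝ) + 1) ^ 2) := by
    have h := summable_one_div_nat_pow.mpr (by norm_num : 1 < 2)
    have h2 := (summable_nat_add_iff 1).mpr h
    exact h2.congr fun n => by push_cast; ring
  have hshift : Summable (fun n : ℕ => 2 * c / (c ^ 2 + 4 * π ^ 2 * ((n : ℝ) + 1) ^ 2)) := by
    refine Summable.of_nonneg_of_le (fun n => by positivity) (fun n => ?_)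
      (hb.mul_left (2 * c / (4 * π ^ 2)))
    have hpi : (0:ℝ) < π ^ 2 := by positivity
    rw [div_mul_div_comm, mul_one]
    refine div_le_div_of_nonneg_left (by positivity) (by positivity) ?_
    nlinarith [sq_nonneg c]
  have hGnat : Summable (fun n : ℕ => G (n : ℤ)) := by
    rw [← summable_nat_add_iff 1]
    exact hshift.congr fun n => by rw [hG]; push_cast; ring
  have hGz : Summable G :=
    hGnat.of_nat_of_neg (hGnat.congr fun n => by rw [hG]; push_cast; ring)
  -- Poisson summation
  have hf_cont : Continuous (fun t : ℝ => (Real.exp (-(c * |t|)) : ℂ)) :=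
    Complex.continuous_ofReal.comp (Real.continuous_exp.comp (by continuity))
  have hFf : Summable (fun n : ℤ =>
      𝓕 (fun t : ℝ => (Real.exp (-(c * |t|)) : ℂ)) (n : ℝ)) := by
    refine (Complex.summable_ofReal.mpr hGz).congr fun n => ?_
    exact (fourier_exp_abs hc (n : ℝ)).symm
  have hP := Real.tsum_eq_tsum_fourier_of_rpow_decay_of_summable hf_cont
    (by norm_num : (1:ℝ) < 2) (exp_abs_decay hc) hFf 0
  simp only [zero_add, QuotientAddGroup.mk_zero, fourier_eval_zero, mul_one] at hP
  have hPG : (∑' n : ℤ, (Real.exp (-(c * |((n : ℤ) : ℝ)|)) : ℂ)) = ∑' n : ℤ, ((G n : ℝ) : ℂ) := by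
    rw [hP]
    exact tsum_congr fun n => by rw [fourier_exp_abs hc (n : ℝ), hG]
  -- geometric side
  set r := Real.exp (-c) with hr
  have hr0 : 0 ≤ r := (Real.exp_pos _).le
  have hr1 : r < 1 := by
    rw [hr, ← Real.exp_zero]
    exact Real.exp_lt_exp.mpr (by linarith)
  have hgeo : HasSum (fun n : ℕ => r ^ n) (1 - r)⁻¹ := hasSum_geometric_of_lt_one hr0 hr1
  set F : ℤ → ℝ := fun n => Real.exp (-(c * |(n : ℝ)|)) with hFdef
  have h1 : HasSum (fun n : ℕ => F (n : ℤ)) (1 - r)⁻¹ := by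
    have : (fun n : ℕ => F (n : ℤ)) = fun n : ℕ => r ^ n := by
      funext n
      rw [hFdef, hr]
      simp only [Int.cast_natCast, abs_of_nonneg (Nat.cast_nonneg n : (0:ℝ) ≤ (n:ℝ))]
      rw [← Real.exp_nat_mul]
      congr 1
      ring
    rw [this]; exact hgeo
  have h2 : HasSum (fun n : ℕ => F (-((n : ℤ) + 1))) (r * (1 - r)⁻¹) := by
    have : (fun n : ℕ => F (-((n : ℤ) + 1))) = fun n : ℕ => r * r ^ n := by
      funext n
      simp only [hFdef, hr]
      have hcast : ((-((n : ℤ) + 1) : ℤ) : ℝ) = -((n : ℝ) + 1) := by push_cast; ring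
      rw [hcast, abs_neg, abs_of_nonneg (by positivity : (0:ℝ) ≤ (n : ℝ) + 1)]
      rw [← Real.exp_nat_mul, ← Real.exp_add]
      congr 1
      push_cast
      ring
    rw [this]; exact hgeo.mul_left r
  have hE : HasSum F ((1 - r)⁻¹ + r * (1 - r)⁻¹) := h1.of_nat_of_neg_add_one h2
  -- transfer tsum equality
  have hGE : HasSum G ((1 - r)⁻¹ + r * (1 - r)⁻¹) := by
    have hs := hGz.hasSum
    have heq : ∑' n, G n = (1 - r)⁻¹ + r * (1 - r)⁻¹ := by
      apply Complex.ofReal_injective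
      rw [Complex.ofReal_tsum, ← hPG, ← Complex.ofReal_tsum, hE.tsum_eq]
    rwa [heq] at hs
  -- decompose the ℤ-sum of G
  have hS1 : Summable (fun n : ℕ => G ((n : ℤ) + 1)) :=
    hshift.congr fun n => by rw [hG]; push_cast; ring
  set S := ∑' n : ℕ, G ((n : ℤ) + 1) with hSdef
  have hpos : HasSum (fun n : ℕ => G ((n : ℤ) + 1)) S := hS1.hasSum
  have hneg : HasSum (fun n : ℕ => G (-((n : ℤ) + 1))) S := by
    have : (fun n : ℕ => G (-((n : ℤ) + 1))) = fun n : ℕ => G ((n : ℤ) + 1) := by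
      funext n; rw [hG]; push_cast; ring_nf
    rw [this]; exact hpos
  have htot : HasSum G (S + G 0 + S) := hpos.of_add_one_of_neg_add_one hneg
  have huniq : S + G 0 + S = (1 - r)⁻¹ + r * (1 - r)⁻¹ := htot.unique hGE
  have hG0 : G 0 = 2 * c / c ^ 2 := by rw [hG]; norm_num
  -- final arithmetic
  have hexp1 : 1 < Real.exp c := by
    rw [← Real.exp_zero]; exact Real.exp_lt_exp.mpr hc
  have he0 : Real.exp c ≠ 0 := (Real.exp_pos c).ne'
  have he1 : Real.exp c - 1 ≠ 0 := by linarith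
  have h1r : (1 : ℝ) - r ≠ 0 := by linarith
  have hrval : r = (Real.exp c)⁻¹ := by rw [hr, Real.exp_neg]
  have hval : 1 / (Real.exp c - 1) - (1 / c - 1 / 2) = S := by
    have hSeq : S = ((1 - r)⁻¹ + r * (1 - r)⁻¹ - 2 * c / c ^ 2) / 2 := by
      rw [hG0] at huniq; linarith
    rw [hSeq, hrval]
    have h1r' : (1 : ℝ) - (Real.exp c)⁻¹ ≠ 0 := by rwa [hrval] at h1r
    field_simp
    ring
  rw [show (fun k : ℕ => 2 * c / (c ^ 2 + 4 * ((k : ℝ) + 1) ^ 2 * π ^ 2))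
      = fun n : ℕ => G ((n : ℤ) + 1) by funext n; rw [hG]; push_cast; ring, hval]
  exact hpos

/-- Euler's partial fraction expansion: for real `x ≠ 0`,
`1/(e^x - 1) = 1/x - 1/2 + ∑_{k=1}^∞ 2x/(x² + 4k²π²)`, the series converging. -/
theorem euler_partial_fraction (x : ℝ) (hx : x ≠ 0) :
    HasSum (fun k : ℕ => 2 * x / (x ^ 2 + 4 * ((k : ℝ) + 1) ^ 2 * π ^ 2))
      (1 / (Real.exp x - 1) - (1 / x - 1 / 2)) := by
  rcases lt_or_gt_of_ne hx with hneg | hpos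
  · have h := (euler_pos (c := -x) (by linarith)).neg
    have hexp1 : Real.exp x ≠ 1 := by
      intro h1
      exact hx (Real.exp_eq_exp.mp (by rw [h1, Real.exp_zero]))
    have he0 : Real.exp x ≠ 0 := (Real.exp_pos x).ne'
    have he1 : Real.exp x - 1 ≠ 0 := sub_ne_zero.mpr hexp1
    have hei : Real.exp (-x) - 1 ≠ 0 := by
      rw [Real.exp_neg]
      intro h0
      apply he1
      have : (Real.exp x)⁻¹ = 1 := by linarith
      field_simp at this
      linarith
    have hfun : (fun k : ℕ => -(2 * -x / ((-x) ^ 2 + 4 * ((k : ℝ) + 1) ^ 2 * π ^ 2)))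
        = fun k : ℕ => 2 * x / (x ^ 2 + 4 * ((k : ℝ) + 1) ^ 2 * π ^ 2) := by
      funext k; ring
    have hval : -(1 / (Real.exp (-x) - 1) - (1 / -x - 1 / 2))
        = 1 / (Real.exp x - 1) - (1 / x - 1 / 2) := by
      have h1e : 1 - Real.exp x ≠ 0 := fun h0 => he1 (by linarith)
      rw [Real.exp_neg] at *
      have hinv : (Real.exp x)⁻¹ - 1 = (1 - Real.exp x) / Real.exp x := by field_simp
      rw [hinv, one_div_div]
      field_simp [hx]
      ring
    rw [hfun, hval] at h
    exact h
  · exact euler_pos hpos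
end

section
/- De Moivre's asymptotics of the central binomial coefficient: the sequence binom(2n, n) · √(πn) / 2^{2n} converges to 1 as n → ∞. -/
open Filter Real

lemma stirlingSeq_pos' (n : ℕ) (hn : n ≠ 0) : 0 < Stirling.stirlingSeq n := by
  have h0 : (0:ℝ) < n := by positivity
  rw [Stirling.stirlingSeq]
  positivity

lemma key_eq (n : ℕ) (hn : n ≠ 0) :
    (((2 * n).choose n : ℕ) : ℝ) * Real.sqrt (π * n) / 2 ^ (2 * n)
      = Stirling.stirlingSeq (2 * n) / (Stirling.stirlingSeq n) ^ 2 * Real.sqrt π := by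
  have h0 : (0:ℝ) < n := by positivity
  have hfac : (((2 * n).choose n : ℕ) : ℝ) = ((2 * n).factorial : ℝ) / ((n.factorial : ℝ) * n.factorial) := by
    rw [eq_div_iff (by positivity)]
    norm_cast
    rw [← Nat.choose_mul_factorial_mul_factorial (by omega : n ≤ 2 * n)]
    ring_nf
    rw [show n * 2 - n = n by omega]
    ring
  have hs2n : Real.sqrt (2 * (2 * n : ℕ)) = 2 * Real.sqrt n := by
    push_cast
    rw [show (2:ℝ) * (2 * n) = 2 ^ 2 * n by ring, Real.sqrt_mul (by positivity),
      Real.sqrt_sq (by norm_num)]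
  have hπn : Real.sqrt (π * n) = Real.sqrt π * Real.sqrt n := Real.sqrt_mul pi_pos.le _
  have hsn : Real.sqrt (2 * n) ≠ 0 := by positivity
  have hfn : (n.factorial : ℝ) ≠ 0 := by positivity
  have hpow : ((n:ℝ) / Real.exp 1) ^ n ≠ 0 := by positivity
  have hrn : Real.sqrt n ≠ 0 := by positivity
  rw [Stirling.stirlingSeq, Stirling.stirlingSeq, hfac, hs2n, hπn]
  have hsq : Real.sqrt n * Real.sqrt n = n := Real.mul_self_sqrt h0.le
  have hsq2 : Real.sqrt (2*n) * Real.sqrt (2*n) = 2 * n := by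
    rw [Real.mul_self_sqrt (by positivity)]
  have hpow2 : ((2 * n : ℕ) : ℝ) / Real.exp 1 = 2 * ((n:ℝ) / Real.exp 1) := by
    push_cast; ring
  rw [hpow2, mul_pow]
  field_simp
  have he : Real.exp (2 * (n:ℝ)) = Real.exp n ^ 2 := by rw [two_mul, Real.exp_add, sq]
  have h2 : Real.sqrt 2 * Real.sqrt 2 = 2 := Real.mul_self_sqrt (by norm_num)
  rw [Real.sq_sqrt h0.le, Real.sq_sqrt (by positivity : (0:ℝ) ≤ 2 * n)]
  ring

/-- De Moivre's asymptotics of the central binomial coefficient: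
`binom(2n,n) √(πn) / 2^{2n} → 1`. -/
theorem central_binom_asymptotics :
    Tendsto (fun n : ℕ =>
        (((2 * n).choose n : ℕ) : ℝ) * Real.sqrt (π * n) / 2 ^ (2 * n))
      atTop (nhds 1) := by
  have hπ : Real.sqrt π ≠ 0 := by positivity
  have h2n : Tendsto (fun n : ℕ => Stirling.stirlingSeq (2 * n)) atTop (nhds (Real.sqrt π)) :=
    Stirling.tendsto_stirlingSeq_sqrt_pi.comp (tendsto_id.const_mul_atTop' two_pos)
  have h : Tendsto (fun n : ℕ =>
      Stirling.stirlingSeq (2 * n) / (Stirling.stirlingSeq n) ^ 2 * Real.sqrt π)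
      atTop (nhds 1) := by
    have := (h2n.div (Stirling.tendsto_stirlingSeq_sqrt_pi.pow 2)
      (pow_ne_zero 2 hπ)).mul (tendsto_const_nhds (x := Real.sqrt π))
    convert this using 2
    · rfl
    rw [Real.sq_sqrt pi_pos.le, div_mul_eq_mul_div, Real.mul_self_sqrt pi_pos.le,
      div_self pi_pos.ne']
  refine h.congr' ?_
  filter_upwards [eventually_ne_atTop 0] with n hn
  exact (key_eq n hn).symm
end

section
/- Wallis's table of integrals: for all positive natural numbers p and q, the integral of (1 - x^{1/q})^p over the interval [0,1] equals p!·q!/(p+q)! = 1/binom(p+q, q). -/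
open intervalIntegral

lemma betaNat : ∀ (n m : ℕ), (∫ x in (0:ℝ)..1, x ^ m * (1 - x) ^ n)
    = ((m.factorial : ℝ) * (n.factorial : ℝ)) / ((m + n + 1).factorial : ℝ) := by
  intro n
  induction n with
  | zero =>
    intro m
    simp only [pow_zero, mul_one, integral_pow, Nat.factorial_zero, Nat.cast_one,
      Nat.add_zero]
    rw [Nat.factorial_succ]
    push_cast
    field_simp
    simp
  | succ n ih =>
    intro m
    have hm : ((m:ℝ) + 1) ≠ 0 := by positivity
    have ibp := intervalIntegral.integral_mul_deriv_eq_deriv_mul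
      (u := fun x : ℝ => (1 - x) ^ (n+1)) (u' := fun x : ℝ => -(((n:ℝ)+1) * (1-x)^n))
      (v := fun x : ℝ => x ^ (m+1) / ((m:ℝ)+1)) (v' := fun x : ℝ => x ^ m)
      (a := 0) (b := 1)
      (fun x _ => by
        have h1 : HasDerivAt (fun x : ℝ => 1 - x) (-1) x := by
          simpa using (hasDerivAt_id x).const_sub 1
        have := h1.fun_pow (n+1)
        simpa [mul_comm, mul_assoc, mul_left_comm] using this)
      (fun x _ => by
        have := (hasDerivAt_pow (m+1) x).div_const ((m:ℝ)+1)
        have h2 : ((m:ℝ)+1) * x ^ m / ((m:ℝ)+1) = x ^ m := by field_simp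
        simpa [h2] using this)
      ((Continuous.neg (by fun_prop)).intervalIntegrable 0 1)
      ((continuous_pow m).intervalIntegrable 0 1)
    have := ibp
    simp only [one_pow, sub_self, zero_pow (Nat.succ_ne_zero n), zero_mul, mul_zero,
      zero_div, sub_zero, zero_sub, zero_pow (Nat.succ_ne_zero m), neg_neg] at this
    -- this : ∫ (1-x)^(n+1) * x^m = - ∫ -((n+1)(1-x)^n) * (x^(m+1)/(m+1))
    have hcomm : (∫ x in (0:ℝ)..1, x ^ m * (1 - x) ^ (n+1))
        = ∫ x in (0:ℝ)..1, (1 - x) ^ (n+1) * x ^ m := by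
      congr 1; ext x; ring
    have hR : (∫ x in (0:ℝ)..1, -(((n:ℝ)+1) * (1-x)^n) * (x ^ (m+1) / ((m:ℝ)+1)))
        = (-((n:ℝ)+1) / ((m:ℝ)+1)) * ∫ x in (0:ℝ)..1, x ^ (m+1) * (1 - x) ^ n := by
      rw [← intervalIntegral.integral_const_mul]
      congr 1; ext x; field_simp
    rw [hcomm, this, hR, ih (m+1)]
    have e1 : m + 1 + n + 1 = m + (n + 1) + 1 := by ring
    rw [e1, Nat.factorial_succ n, Nat.factorial_succ m]
    have hfac : ((m + (n+1) + 1).factorial : ℝ) ≠ 0 := by positivity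
    push_cast
    field_simp

/-- Wallis's table of integrals: for positive naturals `p, q`,
`∫_0^1 (1 - x^{1/q})^p dx = p! q! / (p+q)! = 1 / binom(p+q, q)`. -/
theorem wallis_table_integral (p q : ℕ) (hp : 1 ≤ p) (hq : 1 ≤ q) :
    (∫ x in (0:ℝ)..1, (1 - x ^ ((1 : ℝ) / (q : ℝ))) ^ p) =
        ((p.factorial : ℝ) * (q.factorial : ℝ)) / ((p + q).factorial : ℝ) ∧
      ((p.factorial : ℝ) * (q.factorial : ℝ)) / ((p + q).factorial : ℝ) =
        1 / (((p + q).choose q : ℕ) : ℝ) := by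
  have hq0 : (0:ℝ) < (q:ℝ) := by exact_mod_cast hq
  constructor
  · -- substitution x = u^q
    set g : ℝ → ℝ := fun x => (1 - x ^ ((1 : ℝ) / (q : ℝ))) ^ p with hg
    have hgc : Continuous g := by
      exact (continuous_const.sub (Real.continuous_rpow_const (by positivity))).pow p
    have hsub := intervalIntegral.integral_comp_smul_deriv
      (f := fun u : ℝ => u ^ q) (f' := fun u : ℝ => (q:ℝ) * u ^ (q-1))
      (g := g) (a := 0) (b := 1)
      (fun x _ => by simpa using hasDerivAt_pow q x)
      (by fun_prop) hgc
    simp only [zero_pow (by omega : q ≠ 0), one_pow] at hsub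
    rw [← hsub]
    have hcong : (∫ u in (0:ℝ)..1, ((q:ℝ) * u ^ (q-1)) • (g ∘ (fun u : ℝ => u ^ q)) u)
        = ∫ u in (0:ℝ)..1, (q:ℝ) * (u ^ (q-1) * (1 - u) ^ p) := by
      apply intervalIntegral.integral_congr
      intro u hu
      rw [Set.uIcc_of_le (by norm_num)] at hu
      have hu0 : (0:ℝ) ≤ u := hu.1
      have key : (u ^ q : ℝ) ^ ((1:ℝ)/(q:ℝ)) = u := by
        rw [← Real.rpow_natCast u q, ← Real.rpow_mul hu0]
        rw [mul_one_div, div_self (ne_of_gt hq0), Real.rpow_one]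
      simp only [g, Function.comp, smul_eq_mul, key]
      ring
    rw [hcong, intervalIntegral.integral_const_mul, betaNat p (q-1)]
    have e1 : q - 1 + p + 1 = p + q := by omega
    rw [e1]
    have : ((q-1).factorial : ℝ) * (q:ℝ) = (q.factorial : ℝ) := by
      have : q = (q-1) + 1 := by omega
      rw [this, Nat.factorial_succ]
      push_cast [Nat.sub_add_cancel hq]
      ring
    field_simp
    rw [← this]
    ring
  · have h := Nat.choose_mul_factorial_mul_factorial (Nat.le_add_left q p)
    have e : p + q - q = p := by omega
    rw [e] at h
    have hch : (0:ℝ) < ((p+q).choose q : ℝ) := by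
      exact_mod_cast Nat.choose_pos (Nat.le_add_left q p)
    have h' : ((p+q).choose q : ℝ) * (q.factorial : ℝ) * (p.factorial : ℝ)
        = ((p+q).factorial : ℝ) := by exact_mod_cast congrArg (Nat.cast : ℕ → ℝ) h
    rw [div_eq_div_iff (by positivity) (ne_of_gt hch)]
    rw [one_mul, ← h']; ring
end
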